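/- Two right ideals I, J of a ring R satisfy R/I ≅ R/J as right R-modules if and only if there exists a ∈ R with I + aR = R and a⁻¹I = J. -/
import Mathlib


/-- For `a ∈ R` and a right ideal `I`, the right ideal `a⁻¹I = {r : R | a * r ∈ I}`. -/
def rdiv {R : Type*} [Ring R] (a : R) (I : Submodule Rᵐᵒᵖ R) : Submodule Rᵐᵒᵖ R where
  carrier := {r : R | a * r ∈ I}
  add_mem' hx hy := by simpa [mul_add] using I.add_mem hx hy
  zero_mem' := by simp
  smul_mem' c x hx := by
    simpa [MulOpposite.smul_eq_mul_unop, ← mul_assoc] using I.smul_mem c hx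

lemma mem_rdiv {R : Type*} [Ring R] (a r : R) (I : Submodule Rᵐᵒᵖ R) :
    r ∈ rdiv a I ↔ a * r ∈ I := Iff.rfl

/-- Two right ideals `I, J` satisfy `R/I ≅ R/J` as right `R`-modules iff there
exists `a ∈ R` with `I + aR = R` and `a⁻¹I = J`. -/
theorem quotient_iso_iff {R : Type*} [Ring R] (I J : Submodule Rᵐᵒᵖ R) :
    Nonempty ((R ⧸ I) ≃ₗ[Rᵐᵒᵖ] (R ⧸ J)) ↔
      ∃ a : R, I ⊔ Submodule.span Rᵐᵒᵖ {a} = ⊤ ∧ rdiv a I = J := by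
  constructor
  · rintro ⟨φ⟩
    obtain ⟨a, ha⟩ := Submodule.Quotient.mk_surjective I (φ.symm (Submodule.Quotient.mk 1))
    have key : ∀ r : R, φ (Submodule.Quotient.mk (a * r)) = Submodule.Quotient.mk r := by
      intro r
      have h1 : (a * r : R) = (MulOpposite.op r) • a := by
        simp [MulOpposite.smul_eq_mul_unop]
      rw [h1, Submodule.Quotient.mk_smul, map_smul, ha, LinearEquiv.apply_symm_apply,
        ← Submodule.Quotient.mk_smul]
      simp [MulOpposite.smul_eq_mul_unop]
    refine ⟨a, ?_, ?_⟩
    · obtain ⟨b, hb⟩ := Submodule.Quotient.mk_surjective J (φ (Submodule.Quotient.mk 1))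
      have h2 : Submodule.Quotient.mk (p := I) (a * b) = Submodule.Quotient.mk 1 := by
        apply φ.injective
        rw [key b, hb]
      have h3 : a * b - 1 ∈ I := (Submodule.Quotient.eq I).mp h2
      rw [Submodule.eq_top_iff']
      intro x
      have hx : x = (MulOpposite.op x) • ((-(a * b - 1)) + a * b) := by
        simp [MulOpposite.smul_eq_mul_unop]
      rw [hx]
      refine Submodule.smul_mem _ _ (Submodule.add_mem _ ?_ ?_)
      · exact Submodule.mem_sup_left (I.neg_mem h3)
      · refine Submodule.mem_sup_right ?_
        rw [Submodule.mem_span_singleton]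
        exact ⟨MulOpposite.op b, by simp [MulOpposite.smul_eq_mul_unop]⟩
    · ext r
      rw [mem_rdiv, ← Submodule.Quotient.mk_eq_zero I, ← Submodule.Quotient.mk_eq_zero J,
        ← key r]
      constructor
      · intro h; rw [h, map_zero]
      · intro h; exact φ.injective (by rw [h, map_zero])
  · rintro ⟨a, htop, hJ⟩
    let g : R →ₗ[Rᵐᵒᵖ] (R ⧸ I) :=
      { toFun := fun r => Submodule.Quotient.mk (a * r)
        map_add' := fun x y => by simp [mul_add, Submodule.Quotient.mk_add]
        map_smul' := fun c x => by
          simp only [RingHom.id_apply, MulOpposite.smul_eq_mul_unop, ← mul_assoc]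
          rw [← Submodule.Quotient.mk_smul]
          simp [MulOpposite.smul_eq_mul_unop] }
    have hker : LinearMap.ker g = J := by
      rw [← hJ]; ext r
      simp only [LinearMap.mem_ker, g, LinearMap.coe_mk, AddHom.coe_mk,
        Submodule.Quotient.mk_eq_zero, mem_rdiv]
    have hsurj : Function.Surjective g := by
      intro y
      obtain ⟨x, rfl⟩ := Submodule.Quotient.mk_surjective I y
      have hx : x ∈ I ⊔ Submodule.span Rᵐᵒᵖ {a} := htop ▸ Submodule.mem_top
      obtain ⟨i, hi, s, hs, rfl⟩ := Submodule.mem_sup.mp hx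
      obtain ⟨c, rfl⟩ := Submodule.mem_span_singleton.mp hs
      refine ⟨c.unop, ?_⟩
      have : Submodule.Quotient.mk (p := I) (i + c • a) = Submodule.Quotient.mk (c • a) := by
        rw [Submodule.Quotient.eq]; simpa using hi
      rw [this]
      show Submodule.Quotient.mk (a * c.unop) = Submodule.Quotient.mk (c • a)
      congr 1
    exact ⟨((Submodule.quotEquivOfEq J (LinearMap.ker g) hker.symm).trans
      (g.quotKerEquivOfSurjective hsurj)).symm⟩
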